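/- Let 0 < q1 < q2 < q ≤ 2 and define, for t > 0, u(t) = t^(1 - q1/q)·ρ(q-q2, q2-q1) - t^(1 - q2/q)·ρ(q-q1, q2-q1), where ρ(a,b) = sin(aπ/2)/sin(bπ/2). Then u attains its minimum on (0,∞) at t* = ((q-q2)·ρ(q-q1,q2-q1) / ((q-q1)·ρ(q-q2,q2-q1)))^(q/(q2-q1)) in case q < 2, and u(t) > -1 for all t > 0. -/

import Mathlib

set_option maxHeartbeats 1000000

open Real

/-- `ρ(a,b) = sin(aπ/2)/sin(bπ/2)`. -/
noncomputable def rho (a b : ℝ) : ℝ := Real.sin (a * Real.pi / 2) / Real.sin (b * Real.pi / 2)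

/-- `u(t) = t^(1-q1/q)·ρ(q-q2, q2-q1) - t^(1-q2/q)·ρ(q-q1, q2-q1)`. -/
noncomputable def u (q q1 q2 t : ℝ) : ℝ :=
  t ^ (1 - q1 / q) * rho (q - q2) (q2 - q1) - t ^ (1 - q2 / q) * rho (q - q1) (q2 - q1)

section Aux
open Set

lemma psi_pos {s : ℝ} (h0 : 0 < s) (h1 : s ≤ π) :
    0 < s^2 + Real.sin s^2 - 2*s*Real.sin s*Real.cos s := by
  have key : StrictMonoOn (fun s : ℝ => s^2 + Real.sin s^2 - 2*s*Real.sin s*Real.cos s)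
      (Icc 0 π) := by
    have hd : ∀ x : ℝ, HasDerivAt (fun s : ℝ => s^2 + Real.sin s^2 - 2*s*Real.sin s*Real.cos s)
        (4 * x * Real.sin x ^ 2) x := by
      intro x
      have h1 : HasDerivAt (fun s : ℝ => s^2) (2*x) x := by
        simpa using (hasDerivAt_pow 2 x)
      have h2 : HasDerivAt (fun s : ℝ => Real.sin s ^ 2) (2 * Real.sin x * Real.cos x) x := by
        have := ((Real.hasDerivAt_sin x).pow 2)
        exact this.congr_deriv (by simp [mul_comm, mul_assoc, mul_left_comm])
      have h3 : HasDerivAt (fun s : ℝ => 2*s*Real.sin s*Real.cos s)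
          (2*Real.sin x*Real.cos x + 2*x*Real.cos x*Real.cos x - 2*x*Real.sin x*Real.sin x) x := by
        have := (((hasDerivAt_id x).const_mul (2:ℝ)).mul (Real.hasDerivAt_sin x)).mul
          (Real.hasDerivAt_cos x)
        refine this.congr_deriv ?_
        simp [id]
        ring
      have := (h1.add h2).sub h3
      refine this.congr_deriv ?_
      linear_combination (-(2*x)) * Real.sin_sq_add_cos_sq x
    apply strictMonoOn_of_deriv_pos (convex_Icc 0 π)
    · exact (Continuous.continuousOn (by continuity))
    · intro x hx
      rw [interior_Icc] at hx
      rw [(hd x).deriv]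
      have hs : 0 < Real.sin x := Real.sin_pos_of_pos_of_lt_pi hx.1 hx.2
      have := mul_pos hx.1 (pow_pos hs 2)
      linarith
  have := key (left_mem_Icc.mpr Real.pi_pos.le) ⟨h0.le, h1⟩ h0
  simpa using this

noncomputable def hfun (s : ℝ) : ℝ := s * Real.log (Real.sin s / s)

noncomputable def h1fun (s : ℝ) : ℝ :=
  Real.log (Real.sin s / s) + s * Real.cos s / Real.sin s - 1

lemma hasDerivAt_hfun {x : ℝ} (h0 : 0 < x) (h1 : x < π) :
    HasDerivAt hfun (h1fun x) x := by
  have hs : 0 < Real.sin x := Real.sin_pos_of_pos_of_lt_pi h0 h1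
  have hq : HasDerivAt (fun s : ℝ => Real.sin s / s)
      ((Real.cos x * x - Real.sin x) / x ^ 2) x := by
    exact ((Real.hasDerivAt_sin x).div (hasDerivAt_id x) h0.ne').congr_deriv (by simp)
  have hl : HasDerivAt (fun s : ℝ => Real.log (Real.sin s / s))
      (((Real.cos x * x - Real.sin x) / x ^ 2) / (Real.sin x / x)) x :=
    hq.log (by positivity)
  have := (hasDerivAt_id x).mul hl
  have e : ((Real.cos x * x - Real.sin x) / x ^ 2) / (Real.sin x / x)
      = Real.cos x / Real.sin x - 1 / x := by
    field_simp
  rw [e] at this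
  unfold hfun h1fun
  refine this.congr_deriv ?_
  simp only [id]
  field_simp
  ring

lemma hasDerivAt_h1fun {x : ℝ} (h0 : 0 < x) (h1 : x < π) :
    HasDerivAt h1fun
      (Real.cos x / Real.sin x - 1 / x + (Real.sin x * Real.cos x - x) / Real.sin x ^ 2) x := by
  have hs : 0 < Real.sin x := Real.sin_pos_of_pos_of_lt_pi h0 h1
  have hq : HasDerivAt (fun s : ℝ => Real.sin s / s)
      ((Real.cos x * x - Real.sin x) / x ^ 2) x := by
    exact ((Real.hasDerivAt_sin x).div (hasDerivAt_id x) h0.ne').congr_deriv (by simp)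
  have hl : HasDerivAt (fun s : ℝ => Real.log (Real.sin s / s))
      (((Real.cos x * x - Real.sin x) / x ^ 2) / (Real.sin x / x)) x :=
    hq.log (by positivity)
  have hm : HasDerivAt (fun s : ℝ => s * Real.cos s / Real.sin s)
      (((Real.cos x - x * Real.sin x) * Real.sin x - x * Real.cos x * Real.cos x)
        / Real.sin x ^ 2) x := by
    have hn : HasDerivAt (fun s : ℝ => s * Real.cos s) (Real.cos x - x * Real.sin x) x := by
      have := (hasDerivAt_id x).mul (Real.hasDerivAt_cos x)
      refine this.congr_deriv ?_
      simp [id]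
      ring
    have := hn.div (Real.hasDerivAt_sin x) hs.ne'
    exact this
  have := (hl.add hm).sub_const 1
  unfold h1fun
  refine this.congr_deriv ?_
  field_simp
  linear_combination (-x^2) * Real.sin_sq_add_cos_sq x



lemma hfun_contOn {c : ℝ} (hc : c < π) : ContinuousOn hfun (Icc 0 c) := by
  intro x hx
  rcases eq_or_lt_of_le hx.1 with h | h
  · subst h
    rw [← continuousWithinAt_diff_self]
    have hlim : Filter.Tendsto (fun s : ℝ => Real.sin s / s) (nhdsWithin 0 {(0:ℝ)}ᶜ) (nhds 1) := by
      have := Real.hasDerivAt_sin 0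
      rw [hasDerivAt_iff_tendsto_slope] at this
      rw [Real.cos_zero] at this
      refine this.congr (fun s => ?_)
      simp [slope_def_field]
    have hlim2 : Filter.Tendsto (fun s : ℝ => Real.sin s / s)
        (nhdsWithin 0 (Icc 0 c \ {0})) (nhds 1) :=
      hlim.mono_left (nhdsWithin_mono 0 (by intro y hy; simpa using hy.2))
    have hlog : Filter.Tendsto (fun s : ℝ => Real.log (Real.sin s / s))
        (nhdsWithin 0 (Icc 0 c \ {0})) (nhds 0) := by
      have := (Real.continuousAt_log (one_ne_zero)).tendsto.comp hlim2
      rw [Real.log_one] at this; exact this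
    have hid : Filter.Tendsto (fun s : ℝ => s) (nhdsWithin 0 (Icc 0 c \ {0})) (nhds 0) :=
      Filter.tendsto_id.mono_left nhdsWithin_le_nhds
    have := hid.mul hlog
    unfold ContinuousWithinAt hfun
    simpa using this
  · have hx0 : 0 < x := h
    have hxπ : x < π := lt_of_le_of_lt hx.2 hc
    have hs : 0 < Real.sin x := Real.sin_pos_of_pos_of_lt_pi hx0 hxπ
    apply ContinuousAt.continuousWithinAt
    apply ContinuousAt.mul continuousAt_id
    apply ContinuousAt.log
    · exact (Real.continuous_sin.continuousAt).div continuousAt_id hx0.ne'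
    · positivity

lemma hfun_concave {c : ℝ} (hc0 : 0 < c) (hc : c < π) :
    StrictConcaveOn ℝ (Icc 0 c) hfun := by
  apply strictConcaveOn_of_deriv2_neg (convex_Icc 0 c) (hfun_contOn hc)
  intro x hx
  rw [interior_Icc] at hx
  have hx0 := hx.1
  have hxπ : x < π := hx.2.trans hc
  have hs : 0 < Real.sin x := Real.sin_pos_of_pos_of_lt_pi hx0 hxπ
  have e1 : deriv hfun =ᶠ[nhds x] h1fun := by
    filter_upwards [Ioo_mem_nhds hx0 hxπ] with y hy
    exact (hasDerivAt_hfun hy.1 hy.2).deriv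
  have e2 : deriv^[2] hfun x = deriv h1fun x := by
    show deriv (deriv hfun) x = _
    exact Filter.EventuallyEq.deriv_eq e1
  rw [e2, (hasDerivAt_h1fun hx0 hxπ).deriv]
  have key : Real.cos x / Real.sin x - 1 / x + (Real.sin x * Real.cos x - x) / Real.sin x ^ 2
      = -((x^2 + Real.sin x^2 - 2*x*Real.sin x*Real.cos x) / (x * Real.sin x ^ 2)) := by
    field_simp
    ring
  rw [key, neg_lt, neg_zero]
  exact div_pos (psi_pos hx0 hxπ.le) (by positivity)

lemma hfun_subadd {β γ : ℝ} (hβ : 0 < β) (hγ : 0 < γ) (hsum : β + γ < π) :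
    hfun (β + γ) < hfun β + hfun γ := by
  set α := β + γ with hα_def
  have hα : 0 < α := by positivity
  have sc := hfun_concave hα hsum
  have h0 : hfun 0 = 0 := by simp [hfun]
  have key : ∀ δ : ℝ, 0 < δ → δ < α → (δ/α) * hfun α < hfun δ := by
    intro δ hδ0 hδα
    have ha : (0:ℝ) < δ/α := by positivity
    have hb : (0:ℝ) < (α - δ)/α := div_pos (by linarith) hα
    have hab : δ/α + (α - δ)/α = 1 := by field_simp; ring
    have h1 := sc.2 ⟨hα.le, le_refl α⟩ ⟨le_refl (0:ℝ), hα.le⟩ hα.ne' ha hb hab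
    have e : (δ/α) • α + ((α - δ)/α) • (0:ℝ) = δ := by
      simp only [smul_eq_mul]
      field_simp
      ring
    rw [e, h0] at h1
    simpa using h1
  have k1 := key β hβ (by linarith)
  have k2 := key γ hγ (by linarith)
  have : (β/α) * hfun α + (γ/α) * hfun α = hfun α := by
    field_simp
    ring
  linarith

lemma hfun_expand {w : ℝ} (hw0 : 0 < w) (hw2 : w < 2) :
    hfun (w * π / 2) = (π/2) * (w * Real.log (Real.sin (w * π / 2)) - w * Real.log w
      - w * Real.log (π/2)) := by
  have hπ := Real.pi_pos
  have hwp : 0 < w * π / 2 := by positivity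
  have hlt : w * π / 2 < π := by nlinarith
  have hsin : 0 < Real.sin (w * π / 2) := Real.sin_pos_of_pos_of_lt_pi hwp hlt
  have hlogarg : Real.log (w * π / 2) = Real.log w + Real.log (π/2) := by
    rw [show w * π / 2 = w * (π/2) by ring,
      Real.log_mul hw0.ne' (by positivity : (0:ℝ) < π/2).ne']
  unfold hfun
  rw [Real.log_div hsin.ne' hwp.ne', hlogarg]
  ring

lemma core_log {y z : ℝ} (hy : 0 < y) (hz : 0 < z) (h2 : y + z < 2) :
    (y+z) * Real.log (Real.sin ((y+z) * π / 2)) - (y+z) * Real.log (y+z)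
      < y * Real.log (Real.sin (y * π / 2)) - y * Real.log y
        + (z * Real.log (Real.sin (z * π / 2)) - z * Real.log z) := by
  have hπ := Real.pi_pos
  have h := hfun_subadd (β := y * π / 2) (γ := z * π / 2) (by positivity) (by positivity)
    (by nlinarith)
  rw [show y * π / 2 + z * π / 2 = (y+z) * π / 2 by ring] at h
  rw [hfun_expand (by linarith) h2, hfun_expand hy (by linarith), hfun_expand hz (by linarith)]
    at h
  have hπ2 : (0:ℝ) < π/2 := by positivity
  have h' : ((y + z) * Real.log (Real.sin ((y + z) * π / 2)) - (y + z) * Real.log (y + z)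
        - (y + z) * Real.log (π / 2)) <
      (y * Real.log (Real.sin (y * π / 2)) - y * Real.log y - y * Real.log (π / 2)) +
        (z * Real.log (Real.sin (z * π / 2)) - z * Real.log z - z * Real.log (π / 2)) :=
    lt_of_mul_lt_mul_left (by linarith) hπ2.le
  linarith

lemma min_key {A B a b T : ℝ} (hA : 0 < A) (hB : 0 < B) (hb : 0 < b) (hab : b < a)
    (hT : T = (b * B / (a * A)) ^ ((1:ℝ)/(a-b))) {t : ℝ} (ht : 0 < t) :
    A * T ^ a - B * T ^ b ≤ A * t ^ a - B * t ^ b := by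
  have ha : 0 < a := hb.trans hab
  have hR : 0 < b * B / (a * A) := by positivity
  have hT0 : 0 < T := by rw [hT]; positivity
  have hTab : T ^ (a - b) = b * B / (a * A) := by
    rw [hT, ← Real.rpow_mul hR.le, one_div_mul_cancel (by linarith : a - b ≠ 0), Real.rpow_one]
  have hTa : T ^ a = T ^ b * (b * B / (a * A)) := by
    rw [← hTab, ← Real.rpow_add hT0]
    ring_nf
  have crit : (a/b) * (A * T ^ a) = B * T ^ b := by
    rw [hTa]
    field_simp
  -- substitution w = (t/T)^b
  set w : ℝ := (t / T) ^ b with hw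
  have hw0 : 0 < w := by rw [hw]; positivity
  have htb : t ^ b = T ^ b * w := by
    rw [hw, Real.div_rpow ht.le hT0.le]
    field_simp
  have hta : t ^ a = T ^ a * w ^ (a/b) := by
    rw [hw, ← Real.rpow_mul (by positivity : (0:ℝ) ≤ t / T),
      mul_div_cancel₀ a hb.ne', Real.div_rpow ht.le hT0.le]
    field_simp
  have hp : (1:ℝ) ≤ a / b := (one_le_div hb).mpr hab.le
  have bern : 1 + (a/b) * (w - 1) ≤ w ^ (a/b) := by
    have := one_add_mul_self_le_rpow_one_add (s := w - 1) (by linarith) hp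
    simpa using this
  have hATa : 0 < A * T ^ a := by positivity
  have step : A * T ^ a * (1 + (a/b) * (w - 1)) ≤ A * T ^ a * (w ^ (a/b)) :=
    mul_le_mul_of_nonneg_left bern hATa.le
  rw [hta, htb]
  have expand : A * T ^ a * (1 + (a/b) * (w - 1)) - B * (T ^ b * w)
      = A * T ^ a - B * T ^ b + (w - 1) * ((a/b) * (A * T ^ a) - B * T ^ b) := by ring
  rw [crit, sub_self, mul_zero, add_zero] at expand
  calc A * T ^ a - B * T ^ b
      = A * T ^ a * (1 + (a/b) * (w - 1)) - B * (T ^ b * w) := by rw [expand]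
    _ ≤ A * T ^ a * (w ^ (a/b)) - B * (T ^ b * w) := by linarith
    _ = A * (T ^ a * w ^ (a/b)) - B * (T ^ b * w) := by ring

end Aux

theorem stmt_9 (q q1 q2 : ℝ) (h1 : 0 < q1) (h2 : q1 < q2) (h3 : q2 < q) (h4 : q ≤ 2) :
    (q < 2 → ∀ t : ℝ, 0 < t →
      u q q1 q2 (((q - q2) * rho (q - q1) (q2 - q1) /
          ((q - q1) * rho (q - q2) (q2 - q1))) ^ (q / (q2 - q1))) ≤ u q q1 q2 t) ∧
    (∀ t : ℝ, 0 < t → -1 < u q q1 q2 t) := by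
  have hπ := Real.pi_pos
  have hq : 0 < q := by linarith
  set x := q - q1 with hx_def
  set y := q - q2 with hy_def
  set z := q2 - q1 with hz_def
  have hx : 0 < x := by rw [hx_def]; linarith
  have hy : 0 < y := by rw [hy_def]; linarith
  have hz : 0 < z := by rw [hz_def]; linarith
  have hx2 : x < 2 := by rw [hx_def]; linarith
  have hy2 : y < 2 := by rw [hy_def]; linarith
  have hz2 : z < 2 := by rw [hz_def]; linarith
  have hxeq : x = y + z := by rw [hx_def, hy_def, hz_def]; ring
  have sinpos : ∀ w : ℝ, 0 < w → w < 2 → 0 < Real.sin (w * π / 2) := by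
    intro w h0 hw2
    exact Real.sin_pos_of_pos_of_lt_pi (by positivity) (by nlinarith)
  have hSx := sinpos x hx hx2
  have hSy := sinpos y hy hy2
  have hSz := sinpos z hz hz2
  set AA := rho y z with hAA_def
  set BB := rho x z with hBB_def
  have hAA : 0 < AA := by rw [hAA_def]; unfold rho; exact div_pos hSy hSz
  have hBB : 0 < BB := by rw [hBB_def]; unfold rho; exact div_pos hSx hSz
  have ha' : 1 - q1 / q = x / q := by rw [hx_def]; field_simp
  have hb' : 1 - q2 / q = y / q := by rw [hy_def]; field_simp
  have hb0 : 0 < 1 - q2 / q := by rw [hb']; positivity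
  have hab : 1 - q2 / q < 1 - q1 / q := by
    rw [ha', hb']
    have : y < x := by rw [hx_def, hy_def]; linarith
    exact (div_lt_div_iff_of_pos_right hq).mpr this
  set TT := (y * BB / (x * AA)) ^ (q / z) with hTT_def
  have hbasepos : 0 < y * BB / (x * AA) := by positivity
  have hTT0 : 0 < TT := by rw [hTT_def]; positivity
  have hT : TT = ((1 - q2/q) * BB / ((1 - q1/q) * AA)) ^ ((1:ℝ)/((1 - q1/q) - (1 - q2/q))) := by
    rw [hTT_def]
    congr 1
    · rw [ha', hb']; field_simp
    · rw [ha', hb']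
      rw [show x / q - y / q = z / q by rw [hx_def, hy_def, hz_def]; ring, one_div_div]
  have hmin : ∀ t : ℝ, 0 < t → u q q1 q2 TT ≤ u q q1 q2 t := by
    intro t ht
    have := min_key hAA hBB hb0 hab hT ht
    unfold u
    linarith
  refine ⟨fun _ => hmin, fun t ht => ?_⟩
  -- part 2
  have hab' : (0:ℝ) < (1 - q1/q) - (1 - q2/q) := by linarith
  have ha0 : 0 < 1 - q1/q := by linarith
  have hTab : TT ^ ((1 - q1/q) - (1 - q2/q)) = (1 - q2/q) * BB / ((1 - q1/q) * AA) := by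
    rw [hT, ← Real.rpow_mul (by positivity), one_div_mul_cancel hab'.ne', Real.rpow_one]
  have hTa : TT ^ (1 - q1/q) = TT ^ (1 - q2/q) * ((1 - q2/q) * BB / ((1 - q1/q) * AA)) := by
    rw [← hTab, ← Real.rpow_add hTT0]
    ring_nf
  have hz' : z = x - y := by rw [hxeq]; ring
  have huT : u q q1 q2 TT = -(BB * (z/x) * TT ^ (1 - q2/q)) := by
    unfold u
    rw [hTa, ha', hb', hz']
    generalize TT ^ (y / q) = P
    field_simp
    ring
  have hXpos : 0 < BB * (z/x) * TT ^ (1 - q2/q) :=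
    mul_pos (mul_pos hBB (div_pos hz hx)) (Real.rpow_pos_of_pos hTT0 _)
  have claim : BB * (z/x) * TT ^ (1 - q2/q) < 1 := by
    have hlT : Real.log TT = (q/z) * Real.log (y * BB / (x * AA)) := by
      rw [hTT_def]; exact Real.log_rpow hbasepos _
    have hlbase : Real.log (y * BB / (x * AA))
        = Real.log y + Real.log BB - (Real.log x + Real.log AA) := by
      rw [Real.log_div (by positivity) (by positivity), Real.log_mul hy.ne' hBB.ne',
        Real.log_mul hx.ne' hAA.ne']
    have hlBB : Real.log BB = Real.log (Real.sin (x * π / 2)) - Real.log (Real.sin (z * π / 2)) := by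
      rw [hBB_def]; unfold rho; exact Real.log_div hSx.ne' hSz.ne'
    have hlAA : Real.log AA = Real.log (Real.sin (y * π / 2)) - Real.log (Real.sin (z * π / 2)) := by
      rw [hAA_def]; unfold rho; exact Real.log_div hSy.ne' hSz.ne'
    have core := core_log hy hz (by rw [← hxeq]; exact hx2)
    rw [← hxeq] at core
    apply (Real.log_neg_iff hXpos).mp
    rw [Real.log_mul (mul_pos hBB (div_pos hz hx)).ne' (Real.rpow_pos_of_pos hTT0 _).ne',
      Real.log_mul hBB.ne' (div_pos hz hx).ne',
      Real.log_div hz.ne' hx.ne', Real.log_rpow hTT0, hlT, hlbase, hlBB, hlAA]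
    have hgoal : Real.log (Real.sin (x * π / 2)) - Real.log (Real.sin (z * π / 2))
        + (Real.log z - Real.log x)
        + (1 - q2/q) * ((q/z) * (Real.log y
            + (Real.log (Real.sin (x * π / 2)) - Real.log (Real.sin (z * π / 2)))
            - (Real.log x + (Real.log (Real.sin (y * π / 2)) - Real.log (Real.sin (z * π / 2))))))
        = (1/z) * ((x * Real.log (Real.sin (x * π / 2)) - x * Real.log x)
            - (y * Real.log (Real.sin (y * π / 2)) - y * Real.log y)
            - (z * Real.log (Real.sin (z * π / 2)) - z * Real.log z)) := by
      rw [hb', hxeq]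
      field_simp
      ring
    rw [hgoal]
    apply mul_neg_of_pos_of_neg (by positivity)
    linarith
  have := hmin t ht
  rw [huT] at this
  linarith
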